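/- Let n ≥ 2 be even. Then the directed cycle C_n has no commutative binary polymorphism: there is no polymorphism f : (Z/nZ)² → Z/nZ of C_n with f(x,y) = f(y,x) for all x, y. -/
import Mathlib


/-- For even `n ≥ 2` the directed cycle `C_n` has no commutative binary polymorphism. -/
theorem stmt_4 (n : ℕ) (hn : 2 ≤ n) (heven : Even n) :
    ¬ ∃ f : ZMod n → ZMod n → ZMod n,
      (∀ a b c d : ZMod n, b = a + 1 → d = c + 1 → f b d = f a c + 1) ∧
      (∀ x y : ZMod n, f x y = f y x) := by
  rintro ⟨f, hpoly, hcomm⟩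
  have key : ∀ k : ℕ, ∀ x y : ZMod n, f (x + k) (y + k) = f x y + k := by
    intro k
    induction k with
    | zero => intro x y; simp
    | succ k ih =>
      intro x y
      have h1 := hpoly (x + k) (x + (k + 1 : ℕ)) (y + k) (y + (k + 1 : ℕ))
        (by push_cast; ring) (by push_cast; ring)
      rw [h1, ih]
      push_cast
      ring
  haveI : NeZero n := ⟨by omega⟩
  set m : ℕ := n / 2 with hm
  have hmm : (m : ZMod n) + (m : ZMod n) = 0 := by
    have : m + m = n := by obtain ⟨k, hk⟩ := heven; omega
    rw [← Nat.cast_add, this, ZMod.natCast_self]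
  have h2 := key m 0 (m : ZMod n)
  rw [hmm, zero_add] at h2
  have h3 := hcomm 0 (m : ZMod n)
  rw [h2] at h3
  have h4 : (m : ZMod n) = 0 := left_eq_add.mp h3
  rw [ZMod.natCast_eq_zero_iff] at h4
  have := Nat.le_of_dvd (by omega) h4
  omega
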